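/- In the graph R_n, the rectangular faces can be 2-colored: the 4n² + 2n rectangles split into two sets S and T, each of size 2n² + n, such that any two rectangles in the same set are distant (share no common edge), and this partition is independent of the choice of starting rectangle. -/

import Mathlib

/-- The rectangles of the graph `R_n`: for each `i : Fin n` and
`j : ZMod (4n)` an inner rectangle between the `i`-th and `(i+1)`-th concentric
cycles, and for each `k : ZMod (2n)` an outer rectangle between the outermost
cycle and itself (determined by the outer edges `k` and `k + 1`, which join
antipodal vertices of the outermost cycle). -/
def Rect (n : ℕ) : Type := (Fin n × ZMod (4 * n)) ⊕ ZMod (2 * n)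

instance (n : ℕ) [NeZero n] : NeZero (4 * n) := ⟨by have := NeZero.ne n; omega⟩
instance (n : ℕ) [NeZero n] : NeZero (2 * n) := ⟨by have := NeZero.ne n; omega⟩

instance (n : ℕ) [NeZero n] : Fintype (Rect n) := by
  unfold Rect; infer_instance

instance (n : ℕ) [NeZero n] : DecidableEq (Rect n) := by
  unfold Rect; infer_instance

/-- Two rectangles of `R_n` are neighboured when they share a common edge:
two inner rectangles when they lie between the same pair of cycles in adjacent
positions (sharing a spoke) or in consecutive layers at the same position
(sharing a cycle edge); an inner rectangle of the top layer and an outer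
rectangle when they share a cycle edge of the outermost cycle; and two outer
rectangles when they share an outer edge. -/
def Neighbored (n : ℕ) : Rect n → Rect n → Prop := fun r r' =>
  match r, r' with
  | .inl (i, j), .inl (i', j') =>
      (i = i' ∧ (j' = j + 1 ∨ j = j' + 1)) ∨
      (j = j' ∧ ((i' : ℕ) = (i : ℕ) + 1 ∨ (i : ℕ) = (i' : ℕ) + 1))
  | .inl (i, j), .inr k =>
      (i : ℕ) + 1 = n ∧ (j = (k.val : ZMod (4 * n)) ∨ j = (k.val : ZMod (4 * n)) + 2 * n)
  | .inr k, .inl (i, j) =>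
      (i : ℕ) + 1 = n ∧ (j = (k.val : ZMod (4 * n)) ∨ j = (k.val : ZMod (4 * n)) + 2 * n)
  | .inr k, .inr k' => k' = k + 1 ∨ k = k' + 1

/-- A set of rectangles is "mutually distant" if no two distinct rectangles in
it share a common edge. -/
def MutuallyDistant (n : ℕ) [NeZero n] (S : Finset (Rect n)) : Prop :=
  ∀ r ∈ S, ∀ r' ∈ S, r ≠ r' → ¬ Neighbored n r r'


namespace RectTwoColoring

lemma z20 : (2 : ZMod 2) = 0 := by decide

lemma z2cases : ∀ a : ZMod 2, a = 0 ∨ a = 1 := by decide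

lemma z2ne : ∀ a : ZMod 2, a + 1 ≠ a := by decide

lemma z2iff0 : ∀ a b : ZMod 2, a + b = 0 → (a = 0 ↔ b = 0) := by decide

lemma z2iff1 : ∀ a b : ZMod 2, a + b = 1 → (a = 0 ↔ b = 1) := by decide

lemma z2not0 : ∀ a : ZMod 2, ¬ a = 0 ↔ a = 1 := by decide

/-- The colour of a rectangle. -/
def col (n : ℕ) : Rect n → ZMod 2
  | .inl (i, j) => (i : ZMod 2) + ZMod.castHom (show (2:ℕ) ∣ 4*n by omega) (ZMod 2) j
  | .inr k => (n : ZMod 2) + ZMod.castHom (show (2:ℕ) ∣ 2*n by omega) (ZMod 2) k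

lemma castHom_val {m : ℕ} [NeZero m] (h : (2:ℕ) ∣ m) (k : ZMod m) :
    ZMod.castHom h (ZMod 2) k = ((k.val : ℕ) : ZMod 2) := by
  conv_lhs => rw [← ZMod.natCast_zmod_val k]
  rw [map_natCast]

lemma col_neighbored (n : ℕ) [NeZero n] {r r' : Rect n} (h : Neighbored n r r') :
    col n r' = col n r + 1 := by
  match r, r' with
  | .inl (i, j), .inl (i', j') =>
    rcases h with ⟨hi, hj | hj⟩ | ⟨hj, hi | hi⟩
    · subst hi; subst hj; simp only [col, map_add, map_one]; ring
    · subst hi; subst hj; simp only [col, map_add, map_one]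
      linear_combination -z20
    · subst hj
      have hn : ((i : ℕ) : ZMod 2) + 1 = ((i' : ℕ) : ZMod 2) := by
        exact_mod_cast (congrArg (Nat.cast : ℕ → ZMod 2) hi).symm
      simp only [col]
      linear_combination -hn
    · subst hj
      have hn : ((i' : ℕ) : ZMod 2) + 1 = ((i : ℕ) : ZMod 2) := by
        exact_mod_cast (congrArg (Nat.cast : ℕ → ZMod 2) hi).symm
      simp only [col]
      linear_combination hn - z20
  | .inl (i, j), .inr k =>
    obtain ⟨hi, hj⟩ := h
    have hn : ((i : ℕ) : ZMod 2) + 1 = (n : ZMod 2) := by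
      exact_mod_cast congrArg (Nat.cast : ℕ → ZMod 2) hi
    have hdk := castHom_val (show (2:ℕ) ∣ 2*n by omega) k
    rcases hj with hj | hj <;> subst hj <;> simp only [col, map_add, map_natCast, hdk]
    · linear_combination -hn
    · have hc : (ZMod.castHom (show (2:ℕ) ∣ 4*n by omega) (ZMod 2)) (2 * (n : ZMod (4*n)))
          = 2 * (n : ZMod 2) := by
        rw [map_mul, map_natCast, map_ofNat]
      rw [hc]
      linear_combination -hn - (n : ZMod 2) * z20
  | .inr k, .inl (i, j) =>
    obtain ⟨hi, hj⟩ := h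
    have hn : ((i : ℕ) : ZMod 2) + 1 = (n : ZMod 2) := by
      exact_mod_cast congrArg (Nat.cast : ℕ → ZMod 2) hi
    have hdk := castHom_val (show (2:ℕ) ∣ 2*n by omega) k
    rcases hj with hj | hj <;> subst hj <;> simp only [col, map_add, map_natCast, hdk]
    · linear_combination hn - z20
    · have hc : (ZMod.castHom (show (2:ℕ) ∣ 4*n by omega) (ZMod 2)) (2 * (n : ZMod (4*n)))
          = 2 * (n : ZMod 2) := by
        rw [map_mul, map_natCast, map_ofNat]
      rw [hc]
      linear_combination hn - z20 + (n : ZMod 2) * z20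
  | .inr k, .inr k' =>
    rcases h with h | h
    · subst h; simp only [col, map_add, map_one]; ring
    · subst h; simp only [col, map_add, map_one]
      linear_combination -z20

/-- The colour-flipping bijection. -/
def shift (n : ℕ) [NeZero n] : Rect n ≃ Rect n where
  toFun r := match r with
    | .inl (i, j) => .inl (i, j + 1)
    | .inr k => .inr (k + 1)
  invFun r := match r with
    | .inl (i, j) => .inl (i, j - 1)
    | .inr k => .inr (k - 1)
  left_inv r := by rcases r with ⟨i, j⟩ | k <;> simp <;> rfl
  right_inv r := by rcases r with ⟨i, j⟩ | k <;> simp <;> rfl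

lemma col_shift (n : ℕ) [NeZero n] (r : Rect n) : col n (shift n r) = col n r + 1 := by
  rcases r with ⟨i, j⟩ | k <;> simp only [shift, col, Equiv.coe_fn_mk, map_add, map_one] <;> ring

end RectTwoColoring

open RectTwoColoring in
/-- The `4n² + 2n` rectangles of `R_n` split into two sets `S` and `Sᶜ`, each
of `2n² + n` mutually distant rectangles, and this partition is unique (hence
independent of the choice of the starting rectangle). -/
theorem rectangles_two_coloring (n : ℕ) [NeZero n] :
    ∃ S : Finset (Rect n),
      S.card = 2 * n ^ 2 + n ∧ Sᶜ.card = 2 * n ^ 2 + n ∧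
      MutuallyDistant n S ∧ MutuallyDistant n Sᶜ ∧
      ∀ S' : Finset (Rect n),
        S'.card = 2 * n ^ 2 + n → MutuallyDistant n S' → MutuallyDistant n S'ᶜ →
          S' = S ∨ S' = Sᶜ := by
  classical
  set S : Finset (Rect n) := Finset.univ.filter (fun r => col n r = 0) with hS
  have hmemS : ∀ r : Rect n, r ∈ S ↔ col n r = 0 := by
    intro r; simp [hS]
  have hmemSc : ∀ r : Rect n, r ∈ Sᶜ ↔ col n r = 1 := by
    intro r; rw [Finset.mem_compl, hmemS, z2not0]
  have hmap : Sᶜ = S.map (shift n).toEmbedding := by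
    ext r
    rw [Finset.mem_map_equiv, hmemSc, hmemS]
    have h := col_shift n ((shift n).symm r)
    rw [Equiv.apply_symm_apply] at h
    exact (z2iff1 _ _ (by linear_combination h + col n ((shift n).symm r) * z20)).symm
  have hcards : S.card = Sᶜ.card := by rw [hmap, Finset.card_map]
  have htotal : S.card + Sᶜ.card = 4 * n ^ 2 + 2 * n := by
    rw [Finset.card_add_card_compl]
    have : Fintype.card (Rect n) = Fintype.card ((Fin n × ZMod (4 * n)) ⊕ ZMod (2 * n)) :=
      Fintype.card_congr (Equiv.cast rfl)
    rw [this]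
    simp [ZMod.card]
    ring
  have hScard : S.card = 2 * n ^ 2 + n := by omega
  have hSccard : Sᶜ.card = 2 * n ^ 2 + n := by omega
  have hMD : ∀ (c : ZMod 2) (T : Finset (Rect n)), (∀ r, r ∈ T ↔ col n r = c) →
      MutuallyDistant n T := by
    intro c T hT r hr r' hr' hne hN
    have h := col_neighbored n hN
    rw [(hT r).mp hr, (hT r').mp hr'] at h
    exact z2ne c h.symm
  refine ⟨S, hScard, hSccard, hMD 0 S hmemS, hMD 1 Sᶜ hmemSc, ?_⟩
  intro S' hcard hd hdc
  set g : Rect n → ZMod 2 := fun r => if r ∈ S' then 0 else 1 with hg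
  have hgmem : ∀ r, g r = 0 ↔ r ∈ S' := by
    intro r; simp only [hg]; split <;> simp_all
  have hflip : ∀ r r', Neighbored n r r' → g r' = g r + 1 := by
    intro r r' hN
    have hcol := col_neighbored n hN
    have hne : r ≠ r' := by rintro rfl; exact z2ne _ hcol.symm
    by_cases h1 : r ∈ S' <;> by_cases h2 : r' ∈ S'
    · exact absurd hN (hd r h1 r' h2 hne)
    · simp [hg, h1, h2]
    · simp only [hg, h1, h2, if_pos, if_neg, ite_true, ite_false]; decide
    · exact absurd hN (hdc r (Finset.mem_compl.mpr h1) r' (Finset.mem_compl.mpr h2) hne)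
  set base : ZMod 2 := g (.inr 0) + col n (.inr 0) with hbase
  have houter : ∀ m : ℕ, g (.inr ((m : ℕ) : ZMod (2 * n))) +
      col n (.inr ((m : ℕ) : ZMod (2 * n))) = base := by
    intro m
    induction m with
    | zero => simp [hbase]
    | succ m ih =>
      have hN : Neighbored n (.inr ((m : ℕ) : ZMod (2 * n)))
          (.inr (((m + 1 : ℕ)) : ZMod (2 * n))) := by
        left; push_cast; ring
      have h1 := hflip _ _ hN
      have h2 := col_neighbored n hN
      rw [h1, h2]
      linear_combination ih + z20
  have houterall : ∀ k : ZMod (2 * n), g (.inr k) + col n (.inr k) = base := by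
    intro k
    have := houter k.val
    rwa [ZMod.natCast_zmod_val] at this
  have htop : ∀ (i : Fin n) (j : ZMod (4 * n)), (i : ℕ) + 1 = n →
      g (.inl (i, j)) + col n (.inl (i, j)) = base := by
    intro i j hi
    obtain ⟨k, hk⟩ : ∃ k : ZMod (2 * n),
        j = ((k.val : ℕ) : ZMod (4 * n)) ∨ j = ((k.val : ℕ) : ZMod (4 * n)) + 2 * n := by
      have hjlt : j.val < 4 * n := ZMod.val_lt j
      by_cases hj : j.val < 2 * n
      · refine ⟨((j.val : ℕ) : ZMod (2 * n)), Or.inl ?_⟩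
        rw [ZMod.val_natCast, Nat.mod_eq_of_lt hj, ZMod.natCast_zmod_val]
      · refine ⟨(((j.val - 2 * n : ℕ)) : ZMod (2 * n)), Or.inr ?_⟩
        rw [ZMod.val_natCast, Nat.mod_eq_of_lt (by omega)]
        have h2 : ((2 * n : ZMod (4 * n)) : ZMod (4 * n)) = ((2 * n : ℕ) : ZMod (4 * n)) := by
          push_cast; ring
        rw [h2, ← Nat.cast_add, show j.val - 2 * n + 2 * n = j.val from by omega,
          ZMod.natCast_zmod_val]
    have hN : Neighbored n (.inr k) (.inl (i, j)) := ⟨hi, hk⟩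
    have h1 := hflip _ _ hN
    have h2 := col_neighbored n hN
    rw [h1, h2]
    linear_combination houterall k + z20
  have hlayer : ∀ (t : ℕ) (i : Fin n) (j : ZMod (4 * n)), (i : ℕ) + 1 + t = n →
      g (.inl (i, j)) + col n (.inl (i, j)) = base := by
    intro t
    induction t with
    | zero => intro i j h; exact htop i j (by omega)
    | succ t ih =>
      intro i j h
      have hi1 : (i : ℕ) + 1 < n := by omega
      set i' : Fin n := ⟨(i : ℕ) + 1, hi1⟩ with hi'
      have hN : Neighbored n (.inl (i, j)) (.inl (i', j)) := Or.inr ⟨rfl, Or.inl rfl⟩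
      have h1 := hflip _ _ hN
      have h2 := col_neighbored n hN
      have hih := ih i' j (by simp [hi']; omega)
      rw [h1, h2] at hih
      linear_combination hih - z20
  have hconst : ∀ r : Rect n, g r + col n r = base := by
    intro r
    rcases r with ⟨i, j⟩ | k
    · exact hlayer (n - 1 - (i : ℕ)) i j (by have := i.isLt; omega)
    · exact houterall k
  rcases z2cases base with hc | hc
  · left
    ext r
    rw [← hgmem r, hmemS r]
    exact z2iff0 _ _ (by rw [hconst r, hc])
  · right
    ext r
    rw [← hgmem r, hmemSc r]
    exact z2iff1 _ _ (by rw [hconst r, hc])
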